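/- For every positive integer N_t, every finite family of nonnegative reals (t_a)_{a∈A}, and every real z > 0, there exists a unique m > 0 solving the fixed-point equation FP(t,z); moreover this solution satisfies m ≤ 1/z. -/

import Mathlib

open Finset

/-- Existence and uniqueness of the positive solution of the
fixed-point equation FP(t,z), together with the bound `m ≤ 1/z`. -/
theorem fixed_point_exists_unique
    (Nt : ℕ) (hNt : 0 < Nt)
    (A : Type*) [Fintype A] [Nonempty A]
    (t : A → ℝ) (ht : ∀ a, 0 ≤ t a)
    (z : ℝ) (hz : 0 < z) :
    ∃ m : ℝ,
      (0 < m ∧ 1 / m = (1 / (Nt : ℝ)) * ∑ a, t a / (1 + t a * m) + z ∧ m ≤ 1 / z) ∧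
      ∀ m' : ℝ, 0 < m' →
        1 / m' = (1 / (Nt : ℝ)) * ∑ a, t a / (1 + t a * m') + z → m' = m := by
  have hNt' : (0:ℝ) < (Nt:ℝ) := by exact_mod_cast hNt
  set φ : ℝ → ℝ := fun m => (1 / (Nt : ℝ)) * ∑ a, t a * m / (1 + t a * m) + z * m with hφdef
  have hden : ∀ (a : A) (m : ℝ), 0 ≤ m → 0 < 1 + t a * m := by
    intro a m hm
    have := mul_nonneg (ht a) hm
    linarith
  -- φ is strictly monotone on [0, ∞)
  have hmono : StrictMonoOn φ (Set.Ici 0) := by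
    intro x hx y hy hxy
    simp only [hφdef]
    have hsum : ∀ a : A, t a * x / (1 + t a * x) ≤ t a * y / (1 + t a * y) := by
      intro a
      rw [div_le_div_iff₀ (hden a x hx) (hden a y hy)]
      nlinarith [ht a, mul_nonneg (ht a) (Set.mem_Ici.mp hx), mul_nonneg (ht a) (Set.mem_Ici.mp hy)]
    have h1 : ∑ a, t a * x / (1 + t a * x) ≤ ∑ a, t a * y / (1 + t a * y) :=
      Finset.sum_le_sum fun a _ => hsum a
    have h2 : z * x < z * y := by exact (mul_lt_mul_iff_right₀ hz).mpr hxy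
    have h3 : (1 / (Nt:ℝ)) * ∑ a, t a * x / (1 + t a * x)
        ≤ (1 / (Nt:ℝ)) * ∑ a, t a * y / (1 + t a * y) := by
      apply mul_le_mul_of_nonneg_left h1 (by positivity)
    linarith
  -- continuity on [0, 1/z]
  have hcont : ContinuousOn φ (Set.Icc 0 (1/z)) := by
    apply ContinuousOn.add
    · apply ContinuousOn.mul continuousOn_const
      apply continuousOn_finset_sum
      intro a _
      apply ContinuousOn.div (by fun_prop) (by fun_prop)
      intro x hx
      exact ne_of_gt (hden a x hx.1)
    · fun_prop
  have hz' : (0:ℝ) ≤ 1/z := by positivity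
  have hφ0 : φ 0 = 0 := by simp [hφdef]
  have hφ1 : 1 ≤ φ (1/z) := by
    have hsum : 0 ≤ ∑ a, t a * (1/z) / (1 + t a * (1/z)) := by
      apply Finset.sum_nonneg
      intro a _
      exact div_nonneg (mul_nonneg (ht a) (by positivity)) (hden a _ (by positivity)).le
    have : z * (1/z) = 1 := by field_simp
    simp only [hφdef]
    nlinarith [mul_nonneg (le_of_lt (by positivity : (0:ℝ) < 1/(Nt:ℝ))) hsum]
  -- IVT
  obtain ⟨m, hmIcc, hφm⟩ : ∃ m ∈ Set.Icc (0:ℝ) (1/z), φ m = 1 := by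
    have h := intermediate_value_Icc hz' hcont
    have h1 : (1:ℝ) ∈ Set.Icc (φ 0) (φ (1/z)) := ⟨by rw [hφ0]; norm_num, hφ1⟩
    obtain ⟨m, hm, hm1⟩ := h h1
    exact ⟨m, hm, hm1⟩
  have hmpos : 0 < m := by
    rcases lt_or_eq_of_le hmIcc.1 with h | h
    · exact h
    · exfalso; rw [← h, hφ0] at hφm; norm_num at hφm
  -- key equivalence: for m' > 0, equation ↔ φ m' = 1
  have key : ∀ m' : ℝ, 0 < m' →
      ((1 / m' = (1 / (Nt : ℝ)) * ∑ a, t a / (1 + t a * m') + z) ↔ φ m' = 1) := by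
    intro m' hm'
    have hsum : ∑ a, t a * m' / (1 + t a * m') = m' * ∑ a, t a / (1 + t a * m') := by
      rw [Finset.mul_sum]
      apply Finset.sum_congr rfl
      intro a _
      field_simp
    simp only [hφdef]
    rw [hsum]
    constructor
    · intro h
      have h1 : m' * ((1 / (Nt : ℝ)) * ∑ a, t a / (1 + t a * m') + z) = 1 := by
        rw [← h]; field_simp
      linear_combination h1
    · intro h
      rw [div_eq_iff hm'.ne']
      linear_combination -h
  refine ⟨m, ⟨hmpos, (key m hmpos).mpr hφm, hmIcc.2⟩, ?_⟩
  intro m' hm' heq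
  have hφm' : φ m' = 1 := (key m' hm').mp heq
  exact hmono.injOn (Set.mem_Ici.mpr hm'.le) (Set.mem_Ici.mpr hmpos.le) (by rw [hφm', hφm])
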